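/- arXiv:2206.07809 — 2 statements merged into one kernel-verified Lean document; each statement's English description precedes it below -/
import Mathlib

section
/- Let w, W be reals with 0 < w < W < 1/10, and define g_{w,W}(x) := min(1/‖xw‖, 1/W), where ‖·‖ is the distance to the nearest integer. Then for every integer u ≥ 0, the sum of g_{w,W}(k) over integers k with e^u ≤ |k| < e^{u+1} is O((e^u + 1/w)·log(1/W)), with an absolute implied constant. -/
/-- Distance from a real number to the nearest integer. -/

noncomputable def nearestIntDist (x : ℝ) : ℝ := |x - round x|

/-- `g_{w,W}(x) = min(‖xw‖⁻¹, W⁻¹)`, with the convention that it equals `W⁻¹`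
when `xw` is an integer. -/

noncomputable def gwW (w W x : ℝ) : ℝ :=
  if nearestIntDist (x * w) = 0 then W⁻¹ else min (nearestIntDist (x * w))⁻¹ W⁻¹

lemma nid_nonneg (x : ℝ) : 0 ≤ nearestIntDist x := abs_nonneg _

lemma gwW_nonneg {w W : ℝ} (hW : 0 < W) (x : ℝ) : 0 ≤ gwW w W x := by
  unfold gwW
  split
  · positivity
  · exact le_min (inv_nonneg.2 (nid_nonneg _)) (by positivity)

lemma geom_aux (J : ℕ) : ∑ j ∈ Finset.Icc 1 J, (2:ℝ)^(j+1) ≤ 2^(J+2) := by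
  induction J with
  | zero => simp
  | succ n ih =>
    rw [Finset.sum_Icc_succ_top (by omega)]
    have h : (2:ℝ)^(n+1+2) = 2^(n+2) + 2^(n+1+1) := by ring
    rw [h]
    exact add_le_add ih le_rfl

lemma pointwise {w W : ℝ} (hW : 0 < W) {J : ℕ} (hJ1 : 1 ≤ J)
    (hJ2 : W⁻¹ ≤ 2 ^ J) (x : ℝ) :
    gwW w W x ≤ 2 + ∑ j ∈ Finset.Icc 1 J, (2:ℝ) ^ (j+1) *
      (if nearestIntDist (x * w) < ((2:ℝ) ^ j)⁻¹ then 1 else 0) := by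
  set d := nearestIntDist (x * w) with hd
  have hterm : ∀ j ∈ Finset.Icc 1 J, (0:ℝ) ≤ (2:ℝ) ^ (j+1) *
      (if d < ((2:ℝ) ^ j)⁻¹ then 1 else 0) := by
    intro j _; split <;> positivity
  have key : gwW w W x ≤ 2 ∨ ∃ j ∈ Finset.Icc 1 J,
      gwW w W x ≤ (2:ℝ)^(j+1) * (if d < ((2:ℝ)^j)⁻¹ then 1 else 0) := by
    by_cases h0 : d = 0
    · right
      refine ⟨J, Finset.mem_Icc.2 ⟨hJ1, le_rfl⟩, ?_⟩
      rw [if_pos (by rw [h0]; positivity), mul_one]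
      have hg : gwW w W x = W⁻¹ := by rw [gwW, ← hd, if_pos h0]
      rw [hg]
      calc W⁻¹ ≤ 2^J := hJ2
        _ ≤ 2^(J+1) := by
            apply pow_le_pow_right₀ (by norm_num) (by omega)
    · have hdpos : 0 < d := lt_of_le_of_ne (nid_nonneg _) (Ne.symm h0)
      have hg : gwW w W x = min d⁻¹ W⁻¹ := by rw [gwW, ← hd, if_neg h0]
      by_cases h2 : d < (2:ℝ)⁻¹
      · right
        set S := (Finset.Icc 1 J).filter (fun j => d < ((2:ℝ)^j)⁻¹) with hS
        have h1S : (1:ℕ) ∈ S := by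
          rw [hS, Finset.mem_filter, Finset.mem_Icc]
          refine ⟨⟨le_rfl, hJ1⟩, ?_⟩
          rw [pow_one]; exact h2
        have hne : S.Nonempty := ⟨1, h1S⟩
        obtain ⟨j, hjmem, hjmax⟩ : ∃ j ∈ S, ∀ i ∈ S, i ≤ j :=
          ⟨S.max' hne, S.max'_mem hne, fun i hi => S.le_max' i hi⟩
        obtain ⟨hjIcc, hjlt⟩ := Finset.mem_filter.1 hjmem
        refine ⟨j, hjIcc, ?_⟩
        rw [if_pos hjlt, mul_one, hg]
        by_cases hjJ : j = J
        · subst hjJ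
          refine (min_le_right _ _).trans (hJ2.trans ?_)
          apply pow_le_pow_right₀ (by norm_num) (by omega)
        · have hjle := (Finset.mem_Icc.1 hjIcc).2
          have hj1 : j + 1 ∈ Finset.Icc 1 J := Finset.mem_Icc.2 ⟨by omega, by omega⟩
          have hj1S : j + 1 ∉ S := by
            intro h
            have := hjmax _ h
            omega
          have hnd : ¬ d < ((2:ℝ)^(j+1))⁻¹ := fun h => hj1S (Finset.mem_filter.2 ⟨hj1, h⟩)
          push_neg at hnd
          have hinv : d⁻¹ ≤ 2^(j+1) := by
            rw [← inv_inv ((2:ℝ)^(j+1))]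
            exact inv_anti₀ (by positivity) hnd
          exact (min_le_left _ _).trans hinv
      · left
        push_neg at h2
        rw [hg]
        refine (min_le_left _ _).trans ?_
        rw [show (2:ℝ) = ((2:ℝ)⁻¹)⁻¹ by norm_num]
        exact inv_anti₀ (by norm_num) h2
  rcases key with h | ⟨j, hj, hle⟩
  · have := Finset.sum_nonneg hterm; linarith
  · have := Finset.single_le_sum hterm hj; linarith



lemma counting {w t : ℝ} (hw : 0 < w) (ht : 0 < t) {N : ℤ} (hN : 0 ≤ N) :
    (((Finset.Icc (-N) N).filter
        (fun k : ℤ => nearestIntDist ((k:ℝ) * w) < t)).card : ℝ)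
      ≤ (2 * t / w + 1) * (2 * (N:ℝ) * w + 3) := by
  set M : ℤ := ⌊(N:ℝ) * w⌋ + 1 with hM
  set s := (Finset.Icc (-N) N).filter (fun k : ℤ => nearestIntDist ((k:ℝ) * w) < t) with hs
  have hmem : ∀ k ∈ s, round ((k:ℝ) * w) ∈ Finset.Icc (-M) M := by
    intro k hk
    obtain ⟨hk1, _⟩ := Finset.mem_filter.1 hk
    rw [Finset.mem_Icc] at hk1 ⊢
    have hkabs : |(k:ℝ)| ≤ (N:ℝ) := by
      rw [← Int.cast_abs]
      exact_mod_cast abs_le.2 hk1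
    have h1 : |(k:ℝ) * w| ≤ (N:ℝ) * w := by
      rw [abs_mul, abs_of_pos hw]
      exact mul_le_mul_of_nonneg_right hkabs hw.le
    have h2 : |((round ((k:ℝ)*w) : ℤ) : ℝ)| ≤ (N:ℝ)*w + 2⁻¹ := by
      have hr := abs_sub_round ((k:ℝ)*w)
      calc |((round ((k:ℝ)*w) : ℤ) : ℝ)|
          = |(k:ℝ)*w - ((k:ℝ)*w - (round ((k:ℝ)*w) : ℝ))| := by ring_nf
        _ ≤ |(k:ℝ)*w| + |(k:ℝ)*w - (round ((k:ℝ)*w) : ℝ)| := abs_sub _ _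
        _ ≤ (N:ℝ)*w + 2⁻¹ := by rw [show ((2:ℝ))⁻¹ = 1/2 by norm_num]; exact add_le_add h1 hr
    have hfl : (N:ℝ)*w < (M:ℝ) := by
      rw [hM]; push_cast
      linarith [Int.lt_floor_add_one ((N:ℝ)*w)]
    rw [abs_le] at h2
    constructor
    · have : -((M:ℝ)) - 1 < ((round ((k:ℝ)*w) : ℤ) : ℝ) := by linarith
      have := (by exact_mod_cast this : -M - 1 < round ((k:ℝ)*w))
      omega
    · have : ((round ((k:ℝ)*w) : ℤ) : ℝ) < (M:ℝ) + 1 := by linarith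
      have := (by exact_mod_cast this : round ((k:ℝ)*w) < M + 1)
      omega
  have hcard : s.card = ∑ m ∈ Finset.Icc (-M) M,
      (s.filter (fun k : ℤ => round ((k:ℝ)*w) = m)).card :=
    Finset.card_eq_sum_card_fiberwise hmem
  have hfiber : ∀ m ∈ Finset.Icc (-M) M,
      ((s.filter (fun k : ℤ => round ((k:ℝ)*w) = m)).card : ℝ) ≤ 2 * t / w + 1 := by
    intro m _
    have hsub : s.filter (fun k : ℤ => round ((k:ℝ)*w) = m) ⊆
        Finset.Icc ⌈((m:ℝ) - t)/w⌉ ⌊((m:ℝ) + t)/w⌋ := by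
      intro k hk
      obtain ⟨hk1, hk2⟩ := Finset.mem_filter.1 hk
      obtain ⟨_, hk3⟩ := Finset.mem_filter.1 hk1
      have habs : |(k:ℝ)*w - (m:ℝ)| < t := by
        have hrw : nearestIntDist ((k:ℝ)*w) = |(k:ℝ)*w - ((round ((k:ℝ)*w) : ℤ):ℝ)| := rfl
        rw [hrw, hk2] at hk3
        exact hk3
      rw [abs_sub_lt_iff] at habs
      rw [Finset.mem_Icc]
      constructor
      · rw [Int.ceil_le, div_le_iff₀ hw]
        linarith [habs.2]
      · rw [Int.le_floor, le_div_iff₀ hw]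
        linarith [habs.1]
    calc ((s.filter (fun k : ℤ => round ((k:ℝ)*w) = m)).card : ℝ)
        ≤ ((Finset.Icc ⌈((m:ℝ) - t)/w⌉ ⌊((m:ℝ) + t)/w⌋).card : ℝ) := by
          exact_mod_cast Finset.card_le_card hsub
      _ ≤ 2*t/w + 1 := by
          rw [Int.card_Icc]
          rcases le_or_gt (⌊((m:ℝ)+t)/w⌋ + 1 - ⌈((m:ℝ)-t)/w⌉) 0 with h | h
          · rw [Int.toNat_eq_zero.2 h]
            push_cast
            positivity
          · have hcast : ((((⌊((m:ℝ)+t)/w⌋ + 1 - ⌈((m:ℝ)-t)/w⌉)).toNat : ℝ))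
                = ((⌊((m:ℝ)+t)/w⌋ : ℝ) + 1 - (⌈((m:ℝ)-t)/w⌉ : ℝ)) := by
              have := Int.toNat_of_nonneg h.le
              exact_mod_cast congrArg (fun z : ℤ => (z : ℝ)) this
            rw [hcast]
            have h1 := Int.floor_le (((m:ℝ)+t)/w)
            have h2 := Int.le_ceil (((m:ℝ)-t)/w)
            have h3 : ((m:ℝ)+t)/w - ((m:ℝ)-t)/w = 2*t/w := by ring
            linarith
  have hsum : (s.card : ℝ) ≤ ((Finset.Icc (-M) M).card : ℝ) * (2*t/w+1) := by
    rw [hcard]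
    push_cast
    calc ∑ m ∈ Finset.Icc (-M) M, ((s.filter (fun k : ℤ => round ((k:ℝ)*w) = m)).card : ℝ)
        ≤ ∑ _m ∈ Finset.Icc (-M) M, (2*t/w+1) := Finset.sum_le_sum hfiber
      _ = ((Finset.Icc (-M) M).card : ℝ) * (2*t/w+1) := by
          rw [Finset.sum_const, nsmul_eq_mul]
  have hM1 : 1 ≤ M := by
    rw [hM]
    have : (0:ℝ) ≤ (N:ℝ)*w := by positivity
    have := Int.floor_nonneg.2 this
    omega
  have hcardM : ((Finset.Icc (-M) M).card : ℝ) = 2*(M:ℝ)+1 := by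
    rw [Int.card_Icc]
    have h : M + 1 - (-M) = 2*M+1 := by ring
    rw [h]
    have := Int.toNat_of_nonneg (show (0:ℤ) ≤ 2*M+1 by omega)
    exact_mod_cast congrArg (fun z : ℤ => (z : ℝ)) this
  have hMub : (M:ℝ) ≤ (N:ℝ)*w + 1 := by
    rw [hM]; push_cast
    linarith [Int.floor_le ((N:ℝ)*w)]
  calc (s.card : ℝ) ≤ ((Finset.Icc (-M) M).card : ℝ) * (2*t/w+1) := hsum
    _ = (2*(M:ℝ)+1) * (2*t/w+1) := by rw [hcardM]
    _ ≤ (2*(N:ℝ)*w+3) * (2*t/w+1) := by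
        have : (0:ℝ) ≤ 2*t/w+1 := by positivity
        nlinarith
    _ = (2*t/w+1) * (2*(N:ℝ)*w+3) := by ring


lemma numeric_final {w W Nr E L Jr P : ℝ} (hw : 0 < w) (hwW : w < W) (hWpos : 0 < W)
    (hE1 : 1 ≤ E) (hN1 : 1 ≤ Nr) (hNub : Nr ≤ 2.72*E+1) (hL2 : 2.07 ≤ L)
    (hJ0 : 0 ≤ Jr) (hJL : Jr ≤ 2*L) (hP0 : 0 ≤ P) (hP : P ≤ 8 * W⁻¹) :
    2*(2*Nr+1) + (4*Jr/w + P)*(2*Nr*w+3) ≤ 1000*((E + 1/w)*L) := by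
  have hwinv : (0:ℝ) < w⁻¹ := by positivity
  have hWw : W⁻¹ ≤ w⁻¹ := inv_anti₀ hw hwW.le
  have hwW1 : w * W⁻¹ ≤ 1 := by
    rw [← div_eq_mul_inv]
    exact (div_le_one hWpos).2 hwW.le
  have hfac : (0:ℝ) ≤ 2*Nr*w+3 := by nlinarith
  have hC : P * (2*Nr*w+3) ≤ 16*Nr + 24*w⁻¹ := by
    calc P * (2*Nr*w+3) ≤ (8*W⁻¹) * (2*Nr*w+3) := mul_le_mul_of_nonneg_right hP hfac
      _ = 16*Nr*(w*W⁻¹) + 24*W⁻¹ := by ring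
      _ ≤ 16*Nr + 24*w⁻¹ := by
          have h1 : 16*Nr*(w*W⁻¹) ≤ 16*Nr*1 := by
            apply mul_le_mul_of_nonneg_left hwW1 (by linarith)
          linarith
  have hB : 4*Jr/w * (2*Nr*w+3) = 8*Jr*Nr + 12*Jr*w⁻¹ := by
    field_simp
    ring
  have hJN : Jr*Nr ≤ 5.44*(E*L) + 2*L := by
    calc Jr*Nr ≤ (2*L)*(2.72*E+1) :=
        mul_le_mul hJL hNub (by linarith) (by linarith)
      _ = 5.44*(E*L) + 2*L := by ring
  have hEL : 2.07 * E ≤ E * L := by nlinarith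
  have hLEL : L ≤ E * L := by nlinarith
  have hJw : Jr*w⁻¹ ≤ 2*L*w⁻¹ := mul_le_mul_of_nonneg_right hJL hwinv.le
  have h24 : 2*w⁻¹ ≤ L*w⁻¹ := by nlinarith
  have hrw : (1:ℝ)/w = w⁻¹ := one_div w
  rw [hrw]
  have hsplit : 2*(2*Nr+1) + (4*Jr/w + P)*(2*Nr*w+3)
      = (4*Nr+2) + 4*Jr/w*(2*Nr*w+3) + P*(2*Nr*w+3) := by ring
  have hRHS : 1000*((E+w⁻¹)*L) = 1000*(E*L) + 1000*(L*w⁻¹) := by ring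
  have hELpos : (0:ℝ) ≤ E*L := by nlinarith
  have hLwpos : (0:ℝ) ≤ L*w⁻¹ := mul_nonneg (by linarith) hwinv.le
  rw [hsplit, hRHS]
  linarith [hB, hC, hJN, hEL, hLEL, hJw, h24, hE1, hNub, hELpos, hLwpos]

/-- For `0 < w < W < 1/10` and any integer `u ≥ 0`,
`∑_{e^u ≤ |k| < e^{u+1}} g_{w,W}(k) ≪ (e^u + 1/w) log(1/W)` with an absolute constant. -/
theorem sum_gwW_le : ∃ C : ℝ, 0 < C ∧ ∀ w W : ℝ, 0 < w → w < W → W < 1/10 → ∀ u : ℕ,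
    ∑ k ∈ Finset.Icc (-⌈Real.exp ((u:ℝ)+1)⌉) ⌈Real.exp ((u:ℝ)+1)⌉,
      (if Real.exp (u:ℝ) ≤ |(k:ℝ)| ∧ |(k:ℝ)| < Real.exp ((u:ℝ)+1) then gwW w W (k:ℝ) else 0)
      ≤ C * ((Real.exp (u:ℝ) + 1/w) * Real.log (1/W)) := by
  refine ⟨1000, by norm_num, ?_⟩
  intro w W hw hwW hW10 u
  have hWpos : 0 < W := hw.trans hwW
  have hWinv : (10:ℝ) < W⁻¹ := by
    have h := inv_strictAnti₀ hWpos hW10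
    norm_num at h
    exact h
  -- log bounds
  have hlog2 : (0.6931471803:ℝ) < Real.log 2 := Real.log_two_gt_d9
  have hlog2ub : Real.log 2 < 0.6931471808 := Real.log_two_lt_d9
  have hL8 : Real.log 8 ≤ Real.log W⁻¹ := Real.log_le_log (by norm_num) (by linarith)
  have hlog8 : Real.log 8 = 3 * Real.log 2 := by
    rw [show (8:ℝ) = 2^3 by norm_num, Real.log_pow]; push_cast; ring
  have hL2 : (2.07:ℝ) ≤ Real.log W⁻¹ := by rw [hlog8] at hL8; linarith
  have hL0 : (0:ℝ) < Real.log W⁻¹ := by linarith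
  -- J
  have hlbpos : 0 < Real.logb 2 W⁻¹ := Real.logb_pos (by norm_num) (by linarith)
  set J := ⌈Real.logb 2 W⁻¹⌉₊ with hJdef
  have hJ1 : 1 ≤ J := Nat.ceil_pos.2 hlbpos
  have hJlb : Real.logb 2 W⁻¹ ≤ (J:ℝ) := Nat.le_ceil _
  have hJub : (J:ℝ) < Real.logb 2 W⁻¹ + 1 := Nat.ceil_lt_add_one hlbpos.le
  have h2lb : (2:ℝ) ^ (Real.logb 2 W⁻¹) = W⁻¹ :=
    Real.rpow_logb (by norm_num) (by norm_num) (by positivity)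
  have hJ2 : W⁻¹ ≤ 2 ^ J := by
    rw [← h2lb]
    calc (2:ℝ)^(Real.logb 2 W⁻¹) ≤ (2:ℝ)^((J:ℕ):ℝ) :=
        Real.rpow_le_rpow_of_exponent_le one_le_two hJlb
      _ = 2^J := by rw [Real.rpow_natCast]
  have h2Jub : (2:ℝ) ^ J ≤ 2 * W⁻¹ := by
    calc (2:ℝ)^J = (2:ℝ)^((J:ℕ):ℝ) := (Real.rpow_natCast _ _).symm
      _ ≤ (2:ℝ)^(Real.logb 2 W⁻¹ + 1) :=
        Real.rpow_le_rpow_of_exponent_le one_le_two hJub.le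
      _ = 2 * W⁻¹ := by
          rw [Real.rpow_add (by norm_num), h2lb, Real.rpow_one]; ring
  have hJL : (J:ℝ) ≤ 2 * Real.log W⁻¹ := by
    have hlbL : Real.logb 2 W⁻¹ = Real.log W⁻¹ / Real.log 2 := by
      rw [Real.logb]
    have h1 : Real.log W⁻¹ / Real.log 2 ≤ 1.45 * Real.log W⁻¹ := by
      rw [div_le_iff₀ (by linarith)]
      nlinarith
    rw [hlbL] at hJub
    linarith
  -- N and E
  set N := ⌈Real.exp ((u:ℝ)+1)⌉ with hNdef
  set E := Real.exp (u:ℝ) with hEdef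
  have hE1 : 1 ≤ E := Real.one_le_exp (by positivity)
  have hN1 : 1 ≤ N := Int.ceil_pos.2 (Real.exp_pos _)
  have hN0 : 0 ≤ N := by omega
  have hN1' : (1:ℝ) ≤ (N:ℝ) := by exact_mod_cast hN1
  have hNub : (N:ℝ) ≤ 2.72 * E + 1 := by
    have h1 : (N:ℝ) < Real.exp ((u:ℝ)+1) + 1 := Int.ceil_lt_add_one _
    have h2 : Real.exp ((u:ℝ)+1) = E * Real.exp 1 := by
      rw [hEdef, ← Real.exp_add]
    have h3 : Real.exp 1 < 2.7182818286 := Real.exp_one_lt_d9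
    nlinarith [Real.exp_pos (u:ℝ)]
  have cardIcc : ((Finset.Icc (-N) N).card : ℝ) = 2*(N:ℝ)+1 := by
    rw [Int.card_Icc]
    have h : N + 1 - (-N) = 2*N+1 := by ring
    rw [h]
    have := Int.toNat_of_nonneg (show (0:ℤ) ≤ 2*N+1 by omega)
    exact_mod_cast congrArg (fun z : ℤ => (z : ℝ)) this
  -- the chain
  have step1 : ∑ k ∈ Finset.Icc (-N) N,
      (if E ≤ |(k:ℝ)| ∧ |(k:ℝ)| < Real.exp ((u:ℝ)+1) then gwW w W (k:ℝ) else 0)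
      ≤ ∑ k ∈ Finset.Icc (-N) N, gwW w W (k:ℝ) := by
    apply Finset.sum_le_sum
    intro k _
    split
    · exact le_rfl
    · exact gwW_nonneg hWpos _
  have step2 : ∑ k ∈ Finset.Icc (-N) N, gwW w W (k:ℝ)
      ≤ ∑ k ∈ Finset.Icc (-N) N, (2 + ∑ j ∈ Finset.Icc 1 J, (2:ℝ)^(j+1) *
          (if nearestIntDist ((k:ℝ)*w) < ((2:ℝ)^j)⁻¹ then 1 else 0)) :=
    Finset.sum_le_sum (fun k _ => pointwise hWpos hJ1 hJ2 _)
  have step3 : ∑ k ∈ Finset.Icc (-N) N, (2 + ∑ j ∈ Finset.Icc 1 J, (2:ℝ)^(j+1) *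
          (if nearestIntDist ((k:ℝ)*w) < ((2:ℝ)^j)⁻¹ then 1 else 0))
      = 2*(2*(N:ℝ)+1) + ∑ j ∈ Finset.Icc 1 J, (2:ℝ)^(j+1) *
          (((Finset.Icc (-N) N).filter
            (fun k : ℤ => nearestIntDist ((k:ℝ)*w) < ((2:ℝ)^j)⁻¹)).card : ℝ) := by
    rw [Finset.sum_add_distrib, Finset.sum_const, Finset.sum_comm]
    congr 1
    · rw [nsmul_eq_mul, cardIcc]; ring
    · apply Finset.sum_congr rfl
      intro j _
      rw [← Finset.mul_sum, Finset.sum_boole]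
  have step4 : ∑ j ∈ Finset.Icc 1 J, (2:ℝ)^(j+1) *
          (((Finset.Icc (-N) N).filter
            (fun k : ℤ => nearestIntDist ((k:ℝ)*w) < ((2:ℝ)^j)⁻¹)).card : ℝ)
      ≤ ∑ j ∈ Finset.Icc 1 J, (4/w + (2:ℝ)^(j+1)) * (2*(N:ℝ)*w+3) := by
    apply Finset.sum_le_sum
    intro j _
    have ht : (0:ℝ) < ((2:ℝ)^j)⁻¹ := by positivity
    have hc := counting hw ht hN0
    calc (2:ℝ)^(j+1) * (((Finset.Icc (-N) N).filter
            (fun k : ℤ => nearestIntDist ((k:ℝ)*w) < ((2:ℝ)^j)⁻¹)).card : ℝ)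
        ≤ (2:ℝ)^(j+1) * ((2*((2:ℝ)^j)⁻¹/w + 1)*(2*(N:ℝ)*w+3)) :=
          mul_le_mul_of_nonneg_left hc (by positivity)
      _ = (4/w + (2:ℝ)^(j+1)) * (2*(N:ℝ)*w+3) := by
          have hp : (2:ℝ)^(j+1) = 2 * (2:ℝ)^j := by rw [pow_succ]; ring
          have h2j : ((2:ℝ)^j) ≠ 0 := by positivity
          field_simp
          ring
  have step5 : ∑ j ∈ Finset.Icc 1 J, (4/w + (2:ℝ)^(j+1)) * (2*(N:ℝ)*w+3)
      ≤ (4*(J:ℝ)/w + 2^(J+2)) * (2*(N:ℝ)*w+3) := by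
    have hfac : (0:ℝ) ≤ 2*(N:ℝ)*w+3 := by positivity
    rw [← Finset.sum_mul]
    apply mul_le_mul_of_nonneg_right _ hfac
    rw [Finset.sum_add_distrib, Finset.sum_const, Nat.card_Icc]
    have hcard : J + 1 - 1 = J := by omega
    rw [hcard, nsmul_eq_mul]
    have := geom_aux J
    have h4 : (J:ℝ) * (4/w) = 4*(J:ℝ)/w := by ring
    linarith
  -- final numeric bound
  have h2J4 : (2:ℝ)^(J+2) ≤ 8 * W⁻¹ := by
    rw [pow_add]
    nlinarith [h2Jub]
  have final : 2*(2*(N:ℝ)+1) + (4*(J:ℝ)/w + 2^(J+2)) * (2*(N:ℝ)*w+3)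
      ≤ 1000 * ((E + 1/w) * Real.log W⁻¹) :=
    numeric_final hw hwW hWpos hE1 hN1' hNub hL2
      (by positivity) hJL (by positivity) h2J4
  have hgoal : Real.log (1/W) = Real.log W⁻¹ := by rw [one_div]
  rw [hgoal]
  calc ∑ k ∈ Finset.Icc (-N) N,
      (if E ≤ |(k:ℝ)| ∧ |(k:ℝ)| < Real.exp ((u:ℝ)+1) then gwW w W (k:ℝ) else 0)
      ≤ ∑ k ∈ Finset.Icc (-N) N, gwW w W (k:ℝ) := step1
    _ ≤ _ := step2
    _ = _ := step3
    _ ≤ 2*(2*(N:ℝ)+1) + ∑ j ∈ Finset.Icc 1 J, (4/w + (2:ℝ)^(j+1)) * (2*(N:ℝ)*w+3) := by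
        linarith [step4]
    _ ≤ 2*(2*(N:ℝ)+1) + (4*(J:ℝ)/w + 2^(J+2)) * (2*(N:ℝ)*w+3) := by linarith [step5]
    _ ≤ 1000 * ((E + 1/w) * Real.log W⁻¹) := final
end

section
/- Let A > 1 and ω(x) = (log x)^A, with ω̃ = (ω′)⁻¹ defined for arguments corresponding to x > e^{A−1}. For each integer j ≥ 1 there exists a rational function f_j (depending only on A and j) such that ω̃^{(j)}(ω′(x)) = x^{j+1} f_j(log x) for all x > e^{A−1}. -/
open Real MvPolynomial Filter Set Topology

namespace OmegaInvAux

noncomputable def phi (A : ℝ) (x : ℝ) : ℝ := A * Real.log x ^ (A - 1) / x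

noncomputable def phi' (A : ℝ) (x : ℝ) : ℝ :=
  A * Real.log x ^ (A - 2) * ((A - 1) - Real.log x) / x ^ 2

lemma log_gt {A : ℝ} (hx : Real.exp (A - 1) < x) : A - 1 < Real.log x := by
  have h0 : (0:ℝ) < x := (Real.exp_pos _).trans hx
  have := Real.log_lt_log (Real.exp_pos _) hx
  rwa [Real.log_exp] at this

lemma hasStrictDerivAt_phi {A x : ℝ} (hx0 : 0 < x) (hlx : 0 < Real.log x) :
    HasStrictDerivAt (phi A) (phi' A x) x := by
  have hx : x ≠ 0 := hx0.ne'
  have hl : Real.log x ≠ 0 := hlx.ne'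
  have h1 : HasStrictDerivAt Real.log x⁻¹ x := Real.hasStrictDerivAt_log hx
  have h2 : HasStrictDerivAt (fun y => Real.log y ^ (A - 1))
      ((A - 1) * Real.log x ^ (A - 2) * x⁻¹) x := by
    have := (Real.hasStrictDerivAt_rpow_const_of_ne hl (A - 1)).comp x h1
    rw [show A - 2 = A - 1 - 1 by ring]
    exact this
  have h3 := (h2.const_mul A).div (hasStrictDerivAt_id x) hx
  refine h3.congr_deriv ?_
  have key : Real.log x ^ (A - 1) = Real.log x ^ (A - 2) * Real.log x := by
    have h : A - 1 = (A - 2) + 1 := by ring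
    rw [h, Real.rpow_add_one hl]
  simp only [phi', key, id_eq]
  field_simp

lemma phi'_neg {A x : ℝ} (hA : 1 < A) (hx : Real.exp (A - 1) < x) : phi' A x < 0 := by
  have hx0 : (0:ℝ) < x := (Real.exp_pos _).trans hx
  have hl : A - 1 < Real.log x := log_gt hx
  have hl0 : 0 < Real.log x := by linarith
  have h1 : 0 < A * Real.log x ^ (A - 2) :=
    mul_pos (by linarith) (Real.rpow_pos_of_pos hl0 _)
  have h2 : (A - 1) - Real.log x < 0 := by linarith
  exact div_neg_of_neg_of_pos (mul_neg_of_pos_of_neg h1 h2) (by positivity)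

lemma strictAntiOn_phi {A : ℝ} (hA : 1 < A) :
    StrictAntiOn (phi A) (Set.Ioi (Real.exp (A - 1))) := by
  apply strictAntiOn_of_deriv_neg (convex_Ioi _)
  · intro x hx
    have hx0 : (0:ℝ) < x := (Real.exp_pos _).trans hx
    have hl0 : 0 < Real.log x := by have := log_gt hx; linarith
    exact (hasStrictDerivAt_phi hx0 hl0).hasDerivAt.continuousAt.continuousWithinAt
  · intro x hx
    rw [interior_Ioi] at hx
    have hx0 : (0:ℝ) < x := (Real.exp_pos _).trans hx
    have hl0 : 0 < Real.log x := by have := log_gt hx; linarith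
    rw [(hasStrictDerivAt_phi hx0 hl0).hasDerivAt.deriv]
    exact phi'_neg hA hx

end OmegaInvAux

section Phase2
open Real MvPolynomial Filter Set Topology
namespace OmegaInvAux

variable {A : ℝ} {g : ℝ → ℝ}

lemma eventually_key (hA : 1 < A)
    (hinv : ∀ x : ℝ, Real.exp (A - 1) < x → g (A * Real.log x ^ (A - 1) / x) = x)
    {a b x₀ : ℝ} (ha : Real.exp (A - 1) < a) (hab : a < x₀) (hb : x₀ < b) :
    ∀ᶠ y in 𝓝 (phi A x₀), g y ∈ Set.Ioo a b ∧ Real.exp (A - 1) < g y ∧ phi A (g y) = y := by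
  have hac : a ∈ Set.Ioi (Real.exp (A - 1)) := ha
  have hx₀c : x₀ ∈ Set.Ioi (Real.exp (A - 1)) := ha.trans hab
  have hbc : b ∈ Set.Ioi (Real.exp (A - 1)) := ha.trans (hab.trans hb)
  have hU : phi A x₀ ∈ Set.Ioo (phi A b) (phi A a) :=
    ⟨strictAntiOn_phi hA hx₀c hbc hb, strictAntiOn_phi hA hac hx₀c hab⟩
  have hcont : ContinuousOn (phi A) (Set.Icc a b) := by
    intro t ht
    have ht0 : (0:ℝ) < t := (Real.exp_pos _).trans (ha.trans_le ht.1)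
    have hl0 : 0 < Real.log t := by
      have := log_gt (x := t) (ha.trans_le ht.1); linarith
    exact (hasStrictDerivAt_phi ht0 hl0).hasDerivAt.continuousAt.continuousWithinAt
  have hsub : Set.Ioo (phi A b) (phi A a) ⊆ phi A '' Set.Ioo a b :=
    intermediate_value_Ioo' (le_of_lt (hab.trans hb)) hcont
  filter_upwards [Ioo_mem_nhds hU.1 hU.2] with y hy
  obtain ⟨ξ, hξ, rfl⟩ := hsub hy
  have hξc : Real.exp (A - 1) < ξ := ha.trans hξ.1
  have hgξ : g (phi A ξ) = ξ := hinv ξ hξc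
  rw [hgξ]
  exact ⟨hξ, hξc, rfl⟩

lemma continuousAt_g (hA : 1 < A)
    (hinv : ∀ x : ℝ, Real.exp (A - 1) < x → g (A * Real.log x ^ (A - 1) / x) = x)
    {x₀ : ℝ} (hx₀ : Real.exp (A - 1) < x₀) : ContinuousAt g (phi A x₀) := by
  have hg : g (phi A x₀) = x₀ := hinv x₀ hx₀
  rw [ContinuousAt, hg, tendsto_order]
  constructor
  · intro l hl
    set a := max l ((Real.exp (A - 1) + x₀) / 2) with ha_def
    have ha : Real.exp (A - 1) < a := lt_max_of_lt_right (by linarith)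
    have hab : a < x₀ := max_lt hl (by linarith)
    filter_upwards [eventually_key hA hinv ha hab (lt_add_one x₀)] with y hy
    exact lt_of_le_of_lt (le_max_left _ _) hy.1.1
  · intro u hu
    set b := min u (x₀ + 1) with hb_def
    have hb : x₀ < b := lt_min hu (lt_add_one x₀)
    have ha : Real.exp (A - 1) < (Real.exp (A - 1) + x₀) / 2 := by linarith
    filter_upwards [eventually_key hA hinv ha (by linarith) hb] with y hy
    exact lt_of_lt_of_le hy.1.2 (min_le_left _ _)

lemma hasDerivAt_g (hA : 1 < A)
    (hinv : ∀ x : ℝ, Real.exp (A - 1) < x → g (A * Real.log x ^ (A - 1) / x) = x)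
    {x₀ : ℝ} (hx₀ : Real.exp (A - 1) < x₀) : HasDerivAt g (phi' A x₀)⁻¹ (phi A x₀) := by
  have hg : g (phi A x₀) = x₀ := hinv x₀ hx₀
  have hx0 : (0:ℝ) < x₀ := (Real.exp_pos _).trans hx₀
  have hl0 : 0 < Real.log x₀ := by have := log_gt hx₀; linarith
  refine HasDerivAt.of_local_left_inverse (f := phi A) (continuousAt_g hA hinv hx₀) ?_ (phi'_neg hA hx₀).ne ?_
  · rw [hg]; exact (hasStrictDerivAt_phi hx0 hl0).hasDerivAt
  · have ha : Real.exp (A - 1) < (Real.exp (A - 1) + x₀) / 2 := by linarith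
    filter_upwards [eventually_key hA hinv ha (by linarith) (lt_add_one x₀)] with y hy
    exact hy.2.2

end OmegaInvAux
end Phase2

section Phase3
open Real MvPolynomial Filter Set Topology
namespace OmegaInvAux

lemma hasDerivAt_eval (A : ℝ) {x : ℝ} (hx0 : 0 < x) (hl : 0 < Real.log x)
    (r : MvPolynomial (Fin 2) ℝ) :
    HasDerivAt (fun t => MvPolynomial.eval ![Real.log t, Real.log t ^ A] r)
      (MvPolynomial.eval ![Real.log x, Real.log x ^ A] (pderiv 0 r) * x⁻¹ +
       MvPolynomial.eval ![Real.log x, Real.log x ^ A] (pderiv 1 r) *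
         (A * Real.log x ^ (A - 1) * x⁻¹)) x := by
  have hlog : HasDerivAt Real.log x⁻¹ x := Real.hasDerivAt_log hx0.ne'
  have hrpow : HasDerivAt (fun t => Real.log t ^ A) (A * Real.log x ^ (A - 1) * x⁻¹) x := by
    have := (Real.hasDerivAt_rpow_const (p := A) (Or.inl hl.ne')).comp x hlog
    exact this
  induction r using MvPolynomial.induction_on with
  | C a => simpa using hasDerivAt_const x a
  | add p q hp hq =>
    have := hp.add hq
    simp only [map_add]
    exact this.congr_deriv (by ring)
  | mul_X p i hp =>
    fin_cases i
    · have := hp.mul hlog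
      simp only [map_mul, eval_X, Matrix.cons_val_zero]
      refine this.congr_deriv (Eq.symm ?_)
      simp only [pderiv_mul, pderiv_X_self, pderiv_X_of_ne (by decide : (0:Fin 2) ≠ 1),
        map_add, map_mul, eval_X, Matrix.cons_val_zero, mul_one, mul_zero, add_zero,
        pderiv_X]
      simp
      ring
    · have := hp.mul hrpow
      simp only [map_mul, eval_X, Matrix.cons_val_one, Matrix.head_cons]
      refine this.congr_deriv (Eq.symm ?_)
      simp only [pderiv_mul, pderiv_X_self, pderiv_X_of_ne (by decide : (1:Fin 2) ≠ 0),
        map_add, map_mul, eval_X, Matrix.cons_val_zero, Matrix.cons_val_one, Matrix.head_cons,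
        mul_one, mul_zero, add_zero, pderiv_X]
      simp
      ring

end OmegaInvAux
end Phase3

section Main
open Real MvPolynomial Filter Set Topology OmegaInvAux

/-- For `ω(x) = (log x)^A` with `A > 1` and `ω̃ = (ω′)⁻¹` (here `g`, a left inverse of
`ω′` on `(e^{A-1}, ∞)`), for every `j ≥ 1` there is a rational function `f_j` (rational
in `t` and `t^A`, depending only on `A` and `j`) with
`ω̃^{(j)}(ω′(x)) = x^{j+1} f_j(log x)` for all `x > e^{A-1}`. -/
theorem iteratedDeriv_inverse_omegaD_eq (A : ℝ) (hA : 1 < A) (g : ℝ → ℝ)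
    (hinv : ∀ x : ℝ, Real.exp (A - 1) < x → g (A * Real.log x ^ (A - 1) / x) = x)
    (j : ℕ) (hj : 1 ≤ j) :
    ∃ p q : MvPolynomial (Fin 2) ℝ,
      ∀ x : ℝ, Real.exp (A - 1) < x →
        MvPolynomial.eval ![Real.log x, Real.log x ^ A] q ≠ 0 ∧
        iteratedDeriv j g (A * Real.log x ^ (A - 1) / x) =
          x ^ (j + 1) *
            (MvPolynomial.eval ![Real.log x, Real.log x ^ A] p /
             MvPolynomial.eval ![Real.log x, Real.log x ^ A] q) := by
  induction j, hj using Nat.le_induction with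
  | base =>
    refine ⟨X 0 ^ 2, C A * X 1 * (C (A - 1) - X 0), fun x hx => ?_⟩
    have hx0 : (0:ℝ) < x := (Real.exp_pos _).trans hx
    have hlA : A - 1 < Real.log x := log_gt hx
    have hl0 : 0 < Real.log x := by linarith
    have hv : 0 < Real.log x ^ A := Real.rpow_pos_of_pos hl0 _
    have hsub : (A - 1) - Real.log x ≠ 0 := by intro h; linarith [sub_eq_zero.mp h]
    have hA0 : A ≠ 0 := by linarith
    constructor
    · simp only [map_mul, map_sub, eval_C, eval_X, Matrix.cons_val_zero, Matrix.cons_val_one,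
        Matrix.head_cons]
      exact mul_ne_zero (mul_ne_zero hA0 hv.ne') hsub
    · show iteratedDeriv 1 g (phi A x) = _
      rw [iteratedDeriv_one, (hasDerivAt_g hA hinv hx).deriv]
      simp only [map_mul, map_sub, map_pow, eval_C, eval_X, Matrix.cons_val_zero,
        Matrix.cons_val_one, Matrix.head_cons, phi']
      have e1 : Real.log x ^ (A - 2) = Real.log x ^ A / Real.log x ^ (2:ℕ) := by
        rw [← Real.rpow_natCast (Real.log x) 2, ← Real.rpow_sub hl0]
        norm_num
      rw [e1]
      field_simp
  | succ j hj IH =>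
    obtain ⟨p, q, hpq⟩ := IH
    refine ⟨X 0 * (C ((j:ℝ) + 1) * p * q * X 0 +
        (X 0 * pderiv 0 p + C A * X 1 * pderiv 1 p) * q -
        (X 0 * pderiv 0 q + C A * X 1 * pderiv 1 q) * p),
      C A * X 1 * (C (A - 1) - X 0) * q ^ 2, fun x hx => ?_⟩
    have hx0 : (0:ℝ) < x := (Real.exp_pos _).trans hx
    have hlA : A - 1 < Real.log x := log_gt hx
    have hl0 : 0 < Real.log x := by linarith
    have hv : 0 < Real.log x ^ A := Real.rpow_pos_of_pos hl0 _
    have hsub : (A - 1) - Real.log x ≠ 0 := by intro h; linarith [sub_eq_zero.mp h]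
    have hA0 : A ≠ 0 := by linarith
    have hQ : MvPolynomial.eval ![Real.log x, Real.log x ^ A] q ≠ 0 := (hpq x hx).1
    constructor
    · simp only [map_mul, map_sub, map_pow, eval_C, eval_X, Matrix.cons_val_zero,
        Matrix.cons_val_one, Matrix.head_cons]
      exact mul_ne_zero (mul_ne_zero (mul_ne_zero hA0 hv.ne') hsub) (pow_ne_zero _ hQ)
    · show iteratedDeriv (j + 1) g (phi A x) = _
      -- eventual description of iteratedDeriv j g near phi A x
      have ha : Real.exp (A - 1) < (Real.exp (A - 1) + x) / 2 := by linarith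
      have hev : iteratedDeriv j g =ᶠ[𝓝 (phi A x)]
          (fun t => t ^ (j + 1) *
            (MvPolynomial.eval ![Real.log t, Real.log t ^ A] p /
             MvPolynomial.eval ![Real.log t, Real.log t ^ A] q)) ∘ g := by
        filter_upwards [eventually_key hA hinv ha (by linarith) (lt_add_one x)] with y hy
        have h2 := (hpq (g y) hy.2.1).2
        have h3 : phi A (g y) = y := hy.2.2
        rw [show (A * Real.log (g y) ^ (A - 1) / g y) = phi A (g y) from rfl, h3] at h2
        exact h2
      rw [iteratedDeriv_succ, hev.deriv_eq]
      -- chain rule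
      have hgd : HasDerivAt g (phi' A x)⁻¹ (phi A x) := hasDerivAt_g hA hinv hx
      have hP := hasDerivAt_eval A hx0 hl0 p
      have hQd := hasDerivAt_eval A hx0 hl0 q
      have hpow : HasDerivAt (fun t : ℝ => t ^ (j + 1)) (((j:ℝ) + 1) * x ^ j) x := by
        have := hasDerivAt_pow (j + 1) x
        simpa using this
      have hF := hpow.mul (hP.div hQd hQ)
      have hgx : g (phi A x) = x := hinv x hx
      have repoint : ∀ (f : ℝ → ℝ) (d : ℝ), HasDerivAt f d x → HasDerivAt f d (g (phi A x)) :=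
        fun f d h => hgx.symm ▸ h
      have hcomp := (repoint _ _ hF).comp (phi A x) hgd
      have hcomp' : HasDerivAt ((fun t => t ^ (j + 1) *
        (MvPolynomial.eval ![Real.log t, Real.log t ^ A] p /
          MvPolynomial.eval ![Real.log t, Real.log t ^ A] q)) ∘ g) _ (phi A x) := hcomp
      rw [hcomp'.deriv]
      -- final algebra
      simp only [map_mul, map_add, map_sub, map_pow, eval_C, eval_X, Matrix.cons_val_zero,
        Matrix.cons_val_one, Matrix.head_cons, phi', Pi.div_apply]
      set u := Real.log x
      set P := MvPolynomial.eval ![u, u ^ A] p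
      set Q := MvPolynomial.eval ![u, u ^ A] q
      set P0 := MvPolynomial.eval ![u, u ^ A] (pderiv 0 p)
      set P1 := MvPolynomial.eval ![u, u ^ A] (pderiv 1 p)
      set Q0 := MvPolynomial.eval ![u, u ^ A] (pderiv 0 q)
      set Q1 := MvPolynomial.eval ![u, u ^ A] (pderiv 1 q)
      have e1 : u ^ (A - 1) = u ^ A / u := by
        rw [Real.rpow_sub hl0, Real.rpow_one]
      have e2 : u ^ (A - 2) = u ^ A / u ^ (2:ℕ) := by
        rw [Real.rpow_sub hl0, show (2:ℝ) = ((2:ℕ):ℝ) by norm_num, Real.rpow_natCast]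
      rw [e1, e2]
      field_simp
      ring
end Main
end
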